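/- For every p ∈ [0,∞) there exists a constant C = C(p) such that ∑_{n=1}^∞ x^{n+p} / (n! n^p) ≤ C (e^x − 1) for all x > 0. -/

import Mathlib

lemma fact_bound_aux (n k : ℕ) :
    (n+1+k).factorial ≤ (k+1).factorial * (n+1).factorial * (n+1)^k := by
  induction k with
  | zero => simp
  | succ k ih =>
    have h1 : (n+1+(k+1)).factorial = (n+k+2) * (n+1+k).factorial := by
      rw [show n+1+(k+1) = (n+1+k)+1 by ring, Nat.factorial_succ]
      ring_nf
    calc (n+1+(k+1)).factorial = (n+k+2) * (n+1+k).factorial := h1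
      _ ≤ (n+k+2) * ((k+1).factorial * (n+1).factorial * (n+1)^k) :=
          Nat.mul_le_mul_left _ ih
      _ ≤ ((k+2)*(n+1)) * ((k+1).factorial * (n+1).factorial * (n+1)^k) := by
          apply Nat.mul_le_mul_right; nlinarith
      _ = (k+1+1).factorial * (n+1).factorial * (n+1)^(k+1) := by
          simp [Nat.factorial_succ]; ring

theorem stmt_11 (p : ℝ) (hp : 0 ≤ p) :
    ∃ C : ℝ, ∀ x : ℝ, 0 < x →
      ∑' n : ℕ, x ^ (((n : ℝ) + 1) + p) / ((Nat.factorial (n + 1)) * ((n : ℝ) + 1) ^ p)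
        ≤ C * (Real.exp x - 1) := by
  set k := ⌈p⌉₊ with hk
  refine ⟨1 + (k+1).factorial, fun x hx => ?_⟩
  have hx0 : (0:ℝ) ≤ x := hx.le
  set f : ℕ → ℝ := fun m => x ^ m / m.factorial with hf
  have hfsum : Summable f := Real.summable_pow_div_factorial x
  have hftsum : ∑' m, f m = Real.exp x := by
    rw [Real.exp_eq_exp_ℝ, NormedSpace.exp_eq_tsum_div]
  have hfnonneg : ∀ m, 0 ≤ f m := fun m => by positivity
  set b : ℕ → ℝ := fun n => f (n+1) + (k+1).factorial * f (n+1+k) with hb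
  have hbsum : Summable b := by
    apply Summable.add
    · exact (summable_nat_add_iff 1).2 hfsum
    · apply Summable.mul_left
      have := (summable_nat_add_iff (1+k)).2 hfsum
      simpa [add_assoc, add_comm, add_left_comm] using this
  -- key per-term bound
  have key : ∀ n : ℕ,
      x ^ (((n : ℝ) + 1) + p) / ((Nat.factorial (n + 1)) * ((n : ℝ) + 1) ^ p) ≤ b n := by
    intro n
    have hm : (0:ℝ) < (n:ℝ) + 1 := by positivity
    set t : ℝ := x / ((n:ℝ)+1) with ht
    have ht0 : 0 < t := div_pos hx hm
    have htp : t ^ p ≤ 1 + t ^ k := by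
      rcases le_or_gt t 1 with h | h
      · have : t ^ p ≤ 1 := Real.rpow_le_one ht0.le h hp
        nlinarith [pow_nonneg ht0.le k]
      · have h1 : t ^ p ≤ t ^ (k:ℝ) :=
          Real.rpow_le_rpow_of_exponent_le h.le (Nat.le_ceil p)
        rw [Real.rpow_natCast] at h1
        linarith
    have hsplit : x ^ (((n : ℝ) + 1) + p) / ((Nat.factorial (n + 1)) * ((n : ℝ) + 1) ^ p)
        = (x ^ (n+1) / (Nat.factorial (n+1))) * t ^ p := by
      rw [Real.rpow_add hx, ht, Real.div_rpow hx0 hm.le]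
      have : x ^ (((n:ℝ)+1)) = x ^ (n+1) := by
        rw [show ((n:ℝ)+1) = ((n+1 : ℕ) : ℝ) by push_cast; ring, Real.rpow_natCast]
      rw [this]
      field_simp
    rw [hsplit]
    have hfac : (0:ℝ) < (Nat.factorial (n+1) : ℝ) := by positivity
    have hstep : (x ^ (n+1) / (Nat.factorial (n+1))) * t ^ p
        ≤ (x ^ (n+1) / (Nat.factorial (n+1))) * (1 + t ^ k) := by
      apply mul_le_mul_of_nonneg_left htp
      positivity
    refine hstep.trans ?_
    have heq : (x ^ (n+1) / (Nat.factorial (n+1))) * (1 + t ^ k)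
        = f (n+1) + x ^ (n+1+k) / ((Nat.factorial (n+1)) * ((n:ℝ)+1)^k) := by
      rw [ht, div_pow, pow_add]
      simp only [hf]
      field_simp
      ring
    rw [heq, hb]
    have h2 : x ^ (n+1+k) / ((Nat.factorial (n+1)) * ((n:ℝ)+1)^k)
        ≤ (k+1).factorial * f (n+1+k) := by
      have hfval : f (n+1+k) = x ^ (n+1+k) / ((n+1+k).factorial : ℝ) := rfl
      rw [hfval]
      have hA : (0:ℝ) < (Nat.factorial (n+1)) * ((n:ℝ)+1)^k := by positivity
      have hB : (0:ℝ) < ((n+1+k).factorial : ℝ) := by positivity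
      rw [mul_div_assoc', div_le_div_iff₀ hA hB]
      have hcast : ((n+1+k).factorial : ℝ)
          ≤ ((k+1).factorial : ℝ) * (Nat.factorial (n+1)) * ((n:ℝ)+1)^k := by
        have := fact_bound_aux n k
        have h' : ((n+1+k).factorial : ℝ)
            ≤ (((k+1).factorial * (n+1).factorial * (n+1)^k : ℕ) : ℝ) := by
          exact_mod_cast this
        push_cast at h'
        linarith
      have hxk : (0:ℝ) ≤ x ^ (n+1+k) := by positivity
      calc x ^ (n+1+k) * ((n+1+k).factorial : ℝ)
          ≤ x ^ (n+1+k) * (((k+1).factorial : ℝ) * (Nat.factorial (n+1)) * ((n:ℝ)+1)^k) :=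
            mul_le_mul_of_nonneg_left hcast hxk
        _ = (((k+1).factorial : ℝ) * x ^ (n+1+k)) * ((Nat.factorial (n+1)) * ((n:ℝ)+1)^k) := by
            ring
    linarith
  -- summability of the LHS
  have hasum : Summable (fun n : ℕ =>
      x ^ (((n : ℝ) + 1) + p) / ((Nat.factorial (n + 1)) * ((n : ℝ) + 1) ^ p)) := by
    apply Summable.of_nonneg_of_le (fun n => by positivity) key hbsum
  have hle : ∑' n : ℕ, x ^ (((n : ℝ) + 1) + p) / ((Nat.factorial (n + 1)) * ((n : ℝ) + 1) ^ p)
      ≤ ∑' n, b n := Summable.tsum_le_tsum key hasum hbsum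
  refine hle.trans ?_
  -- compute/estimate tsum b
  have hT1 : ∑' n : ℕ, f (n+1) = Real.exp x - 1 := by
    have h0 : ∑' m, f m = f 0 + ∑' n : ℕ, f (n+1) := Summable.tsum_eq_zero_add hfsum
    have hf0 : f 0 = 1 := by simp [hf]
    rw [hftsum, hf0] at h0
    linarith
  have hT2 : ∑' n : ℕ, f (n+1+k) ≤ Real.exp x - 1 := by
    have hsum2 : Summable (fun n => f (n + (1+k))) := (summable_nat_add_iff (1+k)).2 hfsum
    have h0 : ∑ i ∈ Finset.range (1+k), f i + ∑' n : ℕ, f (n + (1+k)) = ∑' m, f m :=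
      Summable.sum_add_tsum_nat_add (1+k) hfsum
    have hge1 : (1:ℝ) ≤ ∑ i ∈ Finset.range (1+k), f i := by
      have : f 0 ≤ ∑ i ∈ Finset.range (1+k), f i :=
        Finset.single_le_sum (fun i _ => hfnonneg i) (by simp)
      simpa [hf] using this
    have heqidx : ∑' n : ℕ, f (n+1+k) = ∑' n : ℕ, f (n + (1+k)) := by
      congr 1; ext n; congr 1; ring
    rw [heqidx, hftsum] at *
    linarith
  have hbt : ∑' n, b n = (∑' n : ℕ, f (n+1)) + (k+1).factorial * ∑' n : ℕ, f (n+1+k) := by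
    rw [hb, Summable.tsum_add ((summable_nat_add_iff 1).2 hfsum)]
    · rw [tsum_mul_left]
    · apply Summable.mul_left
      have := (summable_nat_add_iff (1+k)).2 hfsum
      simpa [add_assoc, add_comm, add_left_comm] using this
  rw [hbt, hT1]
  have hfacpos : (0:ℝ) ≤ ((k+1).factorial : ℝ) := by positivity
  nlinarith [mul_le_mul_of_nonneg_left hT2 hfacpos]
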